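/- arXiv:math/0504306 — 2 statements merged into one kernel-verified Lean document; each statement's English description precedes it below -/
import Mathlib

section
/- Every automorphism of the symmetric group Sₙ for n ≠ 6 (n a natural number, n ≠ 6) is inner. -/
set_option linter.unusedSectionVars false
open Equiv Equiv.Perm

section Pairs
variable {α : Type*} [DecidableEq α]

def pairsKey (l : List (α × α)) : List α := l.flatMap fun p => [p.1, p.2]
def pairsProd (l : List (α × α)) : Equiv.Perm α := (l.map fun p => Equiv.swap p.1 p.2).prod
def tl (a m : ℕ) : List (ℕ × ℕ) := (List.range m).map fun j => (a+2*j, a+2*j+1)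
def natToFin (n : ℕ) [NeZero n] (i : ℕ) : Fin n := ⟨i % n, Nat.mod_lt _ (Nat.pos_of_ne_zero (NeZero.ne n))⟩

@[simp] lemma pairsKey_nil : pairsKey ([] : List (α × α)) = [] := rfl
@[simp] lemma pairsKey_cons (p : α × α) (l : List (α × α)) :
    pairsKey (p :: l) = p.1 :: p.2 :: pairsKey l := rfl
@[simp] lemma pairsKey_append (l₁ l₂ : List (α × α)) :
    pairsKey (l₁ ++ l₂) = pairsKey l₁ ++ pairsKey l₂ := by simp [pairsKey]
@[simp] lemma pairsProd_nil : pairsProd ([] : List (α × α)) = 1 := rfl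
@[simp] lemma pairsProd_cons (p : α × α) (l : List (α × α)) :
    pairsProd (p :: l) = Equiv.swap p.1 p.2 * pairsProd l := by simp [pairsProd]
@[simp] lemma pairsProd_append (l₁ l₂ : List (α × α)) :
    pairsProd (l₁ ++ l₂) = pairsProd l₁ * pairsProd l₂ := by simp [pairsProd]

lemma pairsKey_tl (a m : ℕ) : pairsKey (tl a m) = (List.range (2*m)).map (a + ·) := by
  induction m with
  | zero => rfl
  | succ m ih =>
    rw [tl, List.range_succ, List.map_append, ← tl, pairsKey_append, ih,
      show 2*(m+1) = (2*m+1)+1 from by ring, List.range_succ, List.range_succ]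
    simp [pairsKey]; omega

lemma pairsKey_map {β : Type*} (f : α → β) (l : List (α × α)) :
    pairsKey (l.map (Prod.map f f)) = (pairsKey l).map f := by
  induction l with
  | nil => rfl
  | cons p l ih => simp [pairsKey_cons, ih]

lemma pairsProd_apply_of_not_mem (l : List (α × α)) {x : α} (hx : x ∉ pairsKey l) :
    pairsProd l x = x := by
  induction l with
  | nil => rfl
  | cons p l ih =>
    simp only [pairsKey_cons, List.mem_cons, not_or] at hx
    simp [pairsProd_cons, ih hx.2.2, Equiv.swap_apply_of_ne_of_ne hx.1 hx.2.1]

lemma disjoint_pairsProd {l₁ l₂ : List (α × α)} (h : ∀ x ∈ pairsKey l₁, x ∉ pairsKey l₂) :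
    (pairsProd l₁).Disjoint (pairsProd l₂) := by
  intro x
  by_cases hx : x ∈ pairsKey l₁
  · exact Or.inr (pairsProd_apply_of_not_mem l₂ (h x hx))
  · exact Or.inl (pairsProd_apply_of_not_mem l₁ hx)

variable [Fintype α]

lemma cycleType_pairsProd {l : List (α × α)} (h : (pairsKey l).Nodup) :
    (pairsProd l).cycleType = Multiset.replicate l.length 2 := by
  induction l with
  | nil => simp
  | cons p l ih =>
    simp only [pairsKey_cons, List.nodup_cons, List.mem_cons, not_or] at h
    obtain ⟨⟨hpp, hp1⟩, hp2, hl⟩ := h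
    have hd : (Equiv.swap p.1 p.2).Disjoint (pairsProd l) := by
      have : ∀ x ∈ pairsKey [p], x ∉ pairsKey l := by
        simp only [pairsKey_cons, pairsKey_nil]
        intro x hx
        simp only [List.mem_cons, List.not_mem_nil, or_false] at hx
        rcases hx with h | h
        · exact h ▸ hp1
        · exact h ▸ hp2
      simpa [pairsProd] using disjoint_pairsProd this
    rw [pairsProd_cons, hd.cycleType_mul, (isCycle_swap hpp).cycleType, ih hl,
      support_swap hpp]
    rw [Finset.card_insert_of_notMem (by simpa using hpp), Finset.card_singleton]
    simp [Multiset.replicate_succ]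

lemma pairsProd_sq {l : List (α × α)} (h : (pairsKey l).Nodup) :
    (pairsProd l) ^ 2 = 1 := by
  have := lcm_cycleType (pairsProd l)
  rw [cycleType_pairsProd h] at this
  apply orderOf_dvd_iff_pow_eq_one.mp
  rw [← this]
  exact Multiset.lcm_dvd.mpr fun b hb => by rw [Multiset.eq_of_mem_replicate hb]

end Pairs

section FinTransport
variable {n : ℕ} [NeZero n]

lemma val_pairsProd (l : List (Fin n × Fin n)) (x : Fin n) :
    ((pairsProd l) x).val = pairsProd (l.map (Prod.map Fin.val Fin.val)) x.val := by
  induction l with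
  | nil => rfl
  | cons p l ih =>
    simp only [pairsProd_cons, List.map_cons, Perm.mul_apply]
    rw [Fin.val_injective.map_swap]
    simp [Prod.map, ih]

lemma natToFin_val {i : ℕ} (hi : i < n) : (natToFin n i).val = i := Nat.mod_eq_of_lt hi

lemma map_natToFin_val (l : List (ℕ × ℕ)) (h : ∀ x ∈ pairsKey l, x < n) :
    (l.map (Prod.map (natToFin n) (natToFin n))).map (Prod.map Fin.val Fin.val) = l := by
  induction l with
  | nil => rfl
  | cons p l ih =>
    simp only [pairsKey_cons, List.mem_cons] at h
    simp only [List.map_cons, Prod.map_map]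
    rw [ih (fun x hx => h x (Or.inr (Or.inr hx)))]
    congr 1
    ext
    · exact natToFin_val (h p.1 (Or.inl rfl))
    · exact natToFin_val (h p.2 (Or.inr (Or.inl rfl)))

/-- Master construction lemma. -/
lemma constr (a m : ℕ) (hc hd : List (ℕ × ℕ))
    (hnc : (pairsKey hc).Nodup) (hnd : (pairsKey hd).Nodup)
    (hbc : ∀ x ∈ pairsKey hc, x < a) (hbd : ∀ x ∈ pairsKey hd, x < a)
    (hmn : a + 2*m ≤ n) :
    ∃ m₀ s₀ : Equiv.Perm (Fin n), m₀.cycleType = Multiset.replicate (hc.length + m) 2 ∧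
      s₀.cycleType = Multiset.replicate (hd.length + m) 2 ∧
      ∀ y : Fin n, ((m₀ * s₀) y).val = pairsProd (hc ++ hd) y.val := by
  set F : ℕ → Fin n := natToFin n with hF
  have htlkey : ∀ x ∈ pairsKey (tl a m), a ≤ x ∧ x < a + 2*m := by
    intro x hx
    rw [pairsKey_tl] at hx
    simp only [List.mem_map, List.mem_range] at hx
    obtain ⟨j, hj, rfl⟩ := hx
    omega
  have keybound : ∀ (l : List (ℕ × ℕ)), (∀ x ∈ pairsKey l, x < a) →
      ∀ x ∈ pairsKey (l ++ tl a m), x < n := by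
    intro l hl x hx
    rw [pairsKey_append, List.mem_append] at hx
    rcases hx with hx | hx
    · exact lt_of_lt_of_le (lt_of_lt_of_le (hl x hx) (Nat.le_add_right _ _)) hmn
    · exact lt_of_lt_of_le (htlkey x hx).2 hmn
  have tlnodup : (pairsKey (tl a m)).Nodup := by
    rw [pairsKey_tl]
    exact (List.nodup_range).map fun x y => by omega
  have keynodup : ∀ (l : List (ℕ × ℕ)), (pairsKey l).Nodup → (∀ x ∈ pairsKey l, x < a) →
      (pairsKey (l ++ tl a m)).Nodup := by
    intro l hnl hbl
    rw [pairsKey_append, List.nodup_append']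
    exact ⟨hnl, tlnodup, fun x hx hx' => absurd (htlkey x hx').1 (by have := hbl x hx; omega)⟩
  have finkeynodup : ∀ (l : List (ℕ × ℕ)), (pairsKey l).Nodup → (∀ x ∈ pairsKey l, x < n) →
      (pairsKey (l.map (Prod.map F F))).Nodup := by
    intro l hnl hbl
    rw [pairsKey_map]
    refine hnl.map_on ?_
    intro x hx y hy hxy
    have : (F x).val = (F y).val := by rw [hxy]
    rwa [natToFin_val (hbl x hx), natToFin_val (hbl y hy)] at this
  refine ⟨pairsProd ((hc ++ tl a m).map (Prod.map F F)),
    pairsProd ((hd ++ tl a m).map (Prod.map F F)), ?_, ?_, ?_⟩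
  · rw [cycleType_pairsProd (finkeynodup _ (keynodup _ hnc hbc) (keybound _ hbc))]
    simp [tl]
  · rw [cycleType_pairsProd (finkeynodup _ (keynodup _ hnd hbd) (keybound _ hbd))]
    simp [tl]
  · intro y
    have hr2 : pairsProd ((tl a m).map (Prod.map F F)) ^ 2 = 1 := by
      apply pairsProd_sq
      apply finkeynodup _ tlnodup
      intro x hx; exact lt_of_lt_of_le (htlkey x hx).2 hmn
    have hcomm : Commute (pairsProd ((tl a m).map (Prod.map F F)))
        (pairsProd (hd.map (Prod.map F F))) := by
      apply Equiv.Perm.Disjoint.commute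
      apply disjoint_pairsProd
      rw [pairsKey_map, pairsKey_map]
      intro x hx hx'
      simp only [List.mem_map] at hx hx'
      obtain ⟨u, hu, rfl⟩ := hx
      obtain ⟨v, hv, hv'⟩ := hx'
      have h1 := (htlkey u hu).1
      have hva : v < a := hbd v hv
      have : (F u).val = (F v).val := by rw [hv']
      rw [natToFin_val (lt_of_lt_of_le (htlkey u hu).2 hmn),
        natToFin_val (by omega : v < n)] at this
      omega
    have key : pairsProd ((hc ++ tl a m).map (Prod.map F F)) *
        pairsProd ((hd ++ tl a m).map (Prod.map F F)) =
        pairsProd ((hc ++ hd).map (Prod.map F F)) := by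
      simp only [List.map_append, pairsProd_append]
      calc pairsProd (hc.map (Prod.map F F)) * pairsProd ((tl a m).map (Prod.map F F)) *
            (pairsProd (hd.map (Prod.map F F)) * pairsProd ((tl a m).map (Prod.map F F)))
          = pairsProd (hc.map (Prod.map F F)) * (pairsProd ((tl a m).map (Prod.map F F)) *
            pairsProd (hd.map (Prod.map F F))) * pairsProd ((tl a m).map (Prod.map F F)) := by
            group
        _ = pairsProd (hc.map (Prod.map F F)) * (pairsProd (hd.map (Prod.map F F)) *
            pairsProd ((tl a m).map (Prod.map F F))) * pairsProd ((tl a m).map (Prod.map F F)) := by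
            rw [hcomm.eq]
        _ = pairsProd (hc.map (Prod.map F F)) * pairsProd (hd.map (Prod.map F F)) *
            (pairsProd ((tl a m).map (Prod.map F F)) * pairsProd ((tl a m).map (Prod.map F F))) := by
            group
        _ = _ := by rw [← sq, hr2, mul_one]
    rw [key, val_pairsProd, map_natToFin_val]
    intro x hx
    rw [pairsKey_append, List.mem_append] at hx
    rcases hx with hx | hx
    · have := hbc x hx; omega
    · have := hbd x hx; omega
end FinTransport

lemma constrA (n k : ℕ) (hk : 2 ≤ k) (hkn : 2*k < n) :
    ∃ m₀ s₀ : Equiv.Perm (Fin n), m₀.cycleType = Multiset.replicate k 2 ∧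
      s₀.cycleType = Multiset.replicate k 2 ∧ (m₀*s₀)^2 ≠ 1 ∧ (m₀*s₀)^3 ≠ 1 := by
  haveI : NeZero n := ⟨by omega⟩
  obtain ⟨m₀, s₀, h1, h2, h3⟩ :=
    constr (n := n) 5 (k-2) [(0,1),(2,3)] [(0,2),(1,4)]
      (by decide) (by decide) (by decide) (by decide) (by omega)
  have hlen : (2 : ℕ) + (k-2) = k := by omega
  have h0 : (0:ℕ) < n := by omega
  set q := m₀ * s₀ with hq
  have e1 : (q (natToFin n 0)).val = 3 := by
    rw [hq, h3, natToFin_val h0]; decide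
  have e2 : (q (q (natToFin n 0))).val = 2 := by
    rw [hq, h3, ← hq, e1]; decide
  have e3 : (q (q (q (natToFin n 0)))).val = 1 := by
    rw [hq, h3, ← hq, e2]; decide
  refine ⟨m₀, s₀, by simpa [hlen] using h1, by simpa [hlen] using h2, ?_, ?_⟩
  · intro hcon
    have : (q ^ 2) (natToFin n 0) = natToFin n 0 := by rw [hcon]; rfl
    rw [pow_two, Equiv.Perm.mul_apply] at this
    rw [this, natToFin_val h0] at e2
    omega
  · intro hcon
    have : (q ^ 3) (natToFin n 0) = natToFin n 0 := by rw [hcon]; rfl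
    rw [pow_succ, pow_two, Equiv.Perm.mul_apply, Equiv.Perm.mul_apply] at this
    rw [this, natToFin_val h0] at e3
    omega

lemma constrB (n k : ℕ) (hk : 5 ≤ k) (hkn : 2*k = n) :
    ∃ m₀ s₀ : Equiv.Perm (Fin n), m₀.cycleType = Multiset.replicate k 2 ∧
      s₀.cycleType = Multiset.replicate k 2 ∧ (m₀*s₀)^2 ≠ 1 ∧ (m₀*s₀)^3 ≠ 1 := by
  haveI : NeZero n := ⟨by omega⟩
  obtain ⟨m₀, s₀, h1, h2, h3⟩ :=
    constr (n := n) 10 (k-5) [(0,1),(2,3),(4,5),(6,7),(8,9)] [(1,2),(3,4),(5,0),(6,8),(7,9)]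
      (by decide) (by decide) (by decide) (by decide) (by omega)
  have hlen : (5 : ℕ) + (k-5) = k := by omega
  have h0 : (0:ℕ) < n := by omega
  have h6 : (6:ℕ) < n := by omega
  set q := m₀ * s₀ with hq
  have e1 : (q (natToFin n 0)).val = 4 := by
    rw [hq, h3, natToFin_val h0]; decide
  have e2 : (q (q (natToFin n 0))).val = 2 := by
    rw [hq, h3, ← hq, e1]; decide
  have f1 : (q (natToFin n 6)).val = 9 := by
    rw [hq, h3, natToFin_val h6]; decide
  have f2 : (q (q (natToFin n 6))).val = 6 := by
    rw [hq, h3, ← hq, f1]; decide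
  have f3 : (q (q (q (natToFin n 6)))).val = 9 := by
    rw [hq, h3, ← hq, f2]; decide
  refine ⟨m₀, s₀, by simpa [hlen] using h1, by simpa [hlen] using h2, ?_, ?_⟩
  · intro hcon
    have : (q ^ 2) (natToFin n 0) = natToFin n 0 := by rw [hcon]; rfl
    rw [pow_two, Equiv.Perm.mul_apply] at this
    rw [this, natToFin_val h0] at e2
    omega
  · intro hcon
    have : (q ^ 3) (natToFin n 6) = natToFin n 6 := by rw [hcon]; rfl
    rw [pow_succ, pow_two, Equiv.Perm.mul_apply, Equiv.Perm.mul_apply] at this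
    rw [this, natToFin_val h6] at f3
    omega
open Equiv Equiv.Perm

section SwapOrder
variable {α : Type*} [DecidableEq α]

lemma swap_cube {p x y : α} (hx : x ≠ p) (hy : y ≠ p) (hxy : x ≠ y) :
    (Equiv.swap p x * Equiv.swap p y) ^ 3 = 1 := by
  have hs : Equiv.swap p x * Equiv.swap p y * Equiv.swap p x = Equiv.swap x y := by
    have h := Equiv.swap_apply_apply (Equiv.swap p x) p y
    rw [Equiv.swap_apply_left, Equiv.swap_apply_of_ne_of_ne hy (Ne.symm hxy),
      Equiv.swap_inv] at h
    exact h.symm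
  have ht : Equiv.swap p y * Equiv.swap p x * Equiv.swap p y = Equiv.swap y x := by
    have h := Equiv.swap_apply_apply (Equiv.swap p y) p x
    rw [Equiv.swap_apply_left, Equiv.swap_apply_of_ne_of_ne hx hxy, Equiv.swap_inv] at h
    exact h.symm
  calc (Equiv.swap p x * Equiv.swap p y) ^ 3
      = (Equiv.swap p x * Equiv.swap p y * Equiv.swap p x) *
        (Equiv.swap p y * Equiv.swap p x * Equiv.swap p y) := by
        rw [pow_succ, pow_two]; simp only [mul_assoc]
    _ = Equiv.swap x y * Equiv.swap y x := by rw [hs, ht]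
    _ = 1 := by rw [Equiv.swap_comm y x, Equiv.swap_mul_self]

lemma swap_disjoint {a b c d : α} (hca : c ≠ a) (hcb : c ≠ b) (hda : d ≠ a) (hdb : d ≠ b) :
    (Equiv.swap a b).Disjoint (Equiv.swap c d) := by
  intro x
  by_cases hx : x = c ∨ x = d
  · left
    rcases hx with rfl | rfl
    · exact Equiv.swap_apply_of_ne_of_ne hca hcb
    · exact Equiv.swap_apply_of_ne_of_ne hda hdb
  · right
    push_neg at hx
    exact Equiv.swap_apply_of_ne_of_ne hx.1 hx.2

lemma swap_mul_swap_order {a b c d : α} (hab : a ≠ b) (hcd : c ≠ d) :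
    (Equiv.swap a b * Equiv.swap c d) ^ 2 = 1 ∨ (Equiv.swap a b * Equiv.swap c d) ^ 3 = 1 := by
  rcases eq_or_ne c a with rfl | hca
  · rcases eq_or_ne d b with rfl | hdb
    · left; rw [Equiv.swap_mul_self, one_pow]
    · right; exact swap_cube (Ne.symm hab) (Ne.symm hcd) (Ne.symm hdb)
  · rcases eq_or_ne c b with rfl | hcb
    · rcases eq_or_ne d a with rfl | hda
      · left; rw [Equiv.swap_comm d c, Equiv.swap_mul_self, one_pow]
      · right
        rw [Equiv.swap_comm a c]
        exact swap_cube hab (Ne.symm hcd) (Ne.symm hda)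
    · rcases eq_or_ne d a with rfl | hda
      · right
        rw [Equiv.swap_comm c d]
        exact swap_cube (Ne.symm hab) hca (Ne.symm hcb)
      · rcases eq_or_ne d b with rfl | hdb
        · right
          rw [Equiv.swap_comm a d, Equiv.swap_comm c d]
          exact swap_cube hab hcb (Ne.symm hca)
        · left
          have hcomm := (swap_disjoint hca hcb hda hdb).commute
          calc (Equiv.swap a b * Equiv.swap c d) ^ 2
              = Equiv.swap a b * (Equiv.swap c d * Equiv.swap a b) * Equiv.swap c d := by
                rw [pow_two]; simp only [mul_assoc]
            _ = Equiv.swap a b * (Equiv.swap a b * Equiv.swap c d) * Equiv.swap c d := by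
                rw [hcomm.symm.eq]
            _ = (Equiv.swap a b * Equiv.swap a b) * (Equiv.swap c d * Equiv.swap c d) := by
                simp only [mul_assoc]
            _ = 1 := by rw [Equiv.swap_mul_self, Equiv.swap_mul_self, one_mul]

lemma swap_share_point {a b c d : α} (hab : a ≠ b) (hcd : c ≠ d)
    (h : ¬ Commute (Equiv.swap a b) (Equiv.swap c d)) :
    ∃ p x y, x ≠ p ∧ y ≠ p ∧ x ≠ y ∧
      Equiv.swap a b = Equiv.swap p x ∧ Equiv.swap c d = Equiv.swap p y := by
  rcases eq_or_ne c a with rfl | hca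
  · rcases eq_or_ne d b with rfl | hdb
    · exact absurd (Commute.refl _) h
    · exact ⟨c, b, d, Ne.symm hab, Ne.symm hcd, Ne.symm hdb, rfl, rfl⟩
  · rcases eq_or_ne c b with rfl | hcb
    · rcases eq_or_ne d a with rfl | hda
      · exact absurd (by rw [Equiv.swap_comm c d] : Commute (Equiv.swap d c) (Equiv.swap c d)) h
      · exact ⟨c, a, d, hab, Ne.symm hcd, Ne.symm hda, Equiv.swap_comm a c, rfl⟩
    · rcases eq_or_ne d a with rfl | hda
      · exact ⟨d, b, c, Ne.symm hab, hca, Ne.symm hcb, rfl, Equiv.swap_comm c d⟩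
      · rcases eq_or_ne d b with rfl | hdb
        · exact ⟨d, a, c, hab, hcb, Ne.symm hca, Equiv.swap_comm a d, Equiv.swap_comm c d⟩
        · exact absurd (swap_disjoint hca hcb hda hdb).commute h
end SwapOrder
section SwapImage
open Equiv Equiv.Perm

variable {n : ℕ}

lemma cycleType_swap' {x y : Fin n} (h : x ≠ y) : (Equiv.swap x y).cycleType = {2} := by
  rw [(isCycle_swap h).cycleType, support_swap h]
  rw [Finset.card_insert_of_notMem (by simpa using h), Finset.card_singleton]

lemma isSwap_of_cycleType {σ : Equiv.Perm (Fin n)} (h : σ.cycleType = {2}) : σ.IsSwap := by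
  rw [← card_support_eq_two, ← sum_cycleType, h]
  rfl

lemma swap_image_isSwap (hn : n ≠ 6) (φ : Equiv.Perm (Fin n) ≃* Equiv.Perm (Fin n))
    {x y : Fin n} (hxy : x ≠ y) : (φ (Equiv.swap x y)).IsSwap := by
  set t : Equiv.Perm (Fin n) := Equiv.swap x y with htdef
  set m : Equiv.Perm (Fin n) := φ t with hmdef
  have ht1 : t ≠ 1 := by
    intro h
    have : t x = x := by rw [h]; rfl
    rw [htdef, Equiv.swap_apply_left] at this
    exact hxy this.symm
  have ht2 : t ^ 2 = 1 := by rw [pow_two, htdef, Equiv.swap_mul_self]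
  have hm1 : m ≠ 1 := by
    intro h
    exact ht1 (φ.injective (by rw [← hmdef, h, map_one]))
  have hm2 : m ^ 2 = 1 := by rw [hmdef, ← map_pow, ht2, map_one]
  have horder : orderOf m = 2 := orderOf_eq_prime hm2 hm1
  obtain ⟨k0, hk⟩ := cycleType_prime_order (by rw [horder]; exact Nat.prime_two)
  rw [horder] at hk
  set k : ℕ := k0 + 1 with hkdef
  suffices hk1 : k = 1 by
    apply isSwap_of_cycleType
    rw [hk, hk1]
    rfl
  by_contra hk1
  have hk2 : 2 ≤ k := by omega
  -- the image of every swap is conjugate to m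
  have hconj_swap : ∀ a b : Fin n, a ≠ b → IsConj m (φ (Equiv.swap a b)) := by
    intro a b hab
    have hconj : IsConj t (Equiv.swap a b) :=
      isConj_of_cycleType_eq (by rw [htdef, cycleType_swap' hxy, cycleType_swap' hab])
    obtain ⟨c, hc⟩ := isConj_iff.mp hconj
    exact isConj_iff.mpr ⟨φ c, by rw [hmdef, ← map_inv, ← map_mul, ← map_mul, hc]⟩
  -- k is odd
  have hkodd : ¬ Even k := by
    intro hke
    have hsignm : Equiv.Perm.sign m = 1 := by
      rw [sign_of_cycleType, hk]
      simp only [Multiset.sum_replicate, Multiset.card_replicate, smul_eq_mul]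
      refine Even.neg_one_pow ?_
      rcases hke with ⟨j, hj⟩
      exact ⟨2*j + j, by omega⟩
    have hs : ∀ a b : Fin n, a ≠ b → Equiv.Perm.sign (φ (Equiv.swap a b)) = 1 := by
      intro a b hab
      obtain ⟨c, hc⟩ := isConj_iff.mp (hconj_swap a b hab)
      rw [← hc]
      simp [hsignm]
    have hall : ∀ g : Equiv.Perm (Fin n), Equiv.Perm.sign (φ g) = 1 := by
      intro g
      have hg : g ∈ Subgroup.closure { σ : Equiv.Perm (Fin n) | σ.IsSwap } := by
        rw [Equiv.Perm.closure_isSwap]; trivial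
      induction hg using Subgroup.closure_induction with
      | mem σ hσ =>
        obtain ⟨a, b, hab, rfl⟩ := hσ
        exact hs a b hab
      | one => rw [map_one, map_one]
      | mul σ τ hσ hτ ihσ ihτ => rw [map_mul, map_mul, ihσ, ihτ, mul_one]
      | inv σ hσ ihσ => rw [map_inv, map_inv, ihσ, inv_one]
    have := hall (φ.symm t)
    rw [MulEquiv.apply_symm_apply, htdef, Equiv.Perm.sign_swap hxy] at this
    exact absurd this (by decide)
  -- property P
  have hP : ∀ s : Equiv.Perm (Fin n), IsConj m s → (m*s)^2 = 1 ∨ (m*s)^3 = 1 := by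
    intro s hconj
    have hs0 : s = φ (φ.symm s) := (MulEquiv.apply_symm_apply φ s).symm
    have h1 : IsConj t (φ.symm s) := by
      obtain ⟨c, hc⟩ := isConj_iff.mp hconj
      refine isConj_iff.mpr ⟨φ.symm c, ?_⟩
      apply φ.injective
      rw [map_mul, map_mul, map_inv, MulEquiv.apply_symm_apply, MulEquiv.apply_symm_apply,
        ← hmdef, hc]
    have hsw : (φ.symm s).IsSwap := by
      apply isSwap_of_cycleType
      rw [← isConj_iff_cycleType_eq.mp h1, htdef, cycleType_swap' hxy]
    obtain ⟨a, b, hab, hab'⟩ := hsw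
    have key : m * s = φ (t * Equiv.swap a b) := by
      rw [map_mul, hmdef, ← hab', ← hs0]
    rcases swap_mul_swap_order hxy hab with h | h
    · left; rw [key, ← map_pow, htdef, h, map_one]
    · right; rw [key, ← map_pow, htdef, h, map_one]
  -- 2k ≤ n
  have h2k : 2 * k ≤ n := by
    have hsum := sum_cycleType m
    rw [hk, Multiset.sum_replicate, smul_eq_mul] at hsum
    have hle : m.support.card ≤ Fintype.card (Fin n) := Finset.card_le_univ _
    rw [Fintype.card_fin] at hle
    omega
  obtain ⟨m₀, s₀, hm₀, hs₀, hpow2, hpow3⟩ :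
      ∃ m₀ s₀ : Equiv.Perm (Fin n), m₀.cycleType = Multiset.replicate k 2 ∧
        s₀.cycleType = Multiset.replicate k 2 ∧ (m₀*s₀)^2 ≠ 1 ∧ (m₀*s₀)^3 ≠ 1 := by
    rcases lt_or_eq_of_le h2k with hlt | heq
    · exact constrA n k hk2 hlt
    · have hk5 : 5 ≤ k := by
        rw [Nat.even_iff] at hkodd
        have hk3 : k ≠ 3 := by intro h; rw [h] at heq; omega
        omega
      exact constrB n k hk5 heq
  have hconj0 : IsConj m m₀ := isConj_of_cycleType_eq (by rw [hk, hm₀])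
  obtain ⟨c, hc⟩ := isConj_iff.mp hconj0
  set s : Equiv.Perm (Fin n) := c⁻¹ * s₀ * c with hsdef
  have hconjs : IsConj m s := by
    apply isConj_of_cycleType_eq
    rw [hk, hsdef, show c⁻¹ * s₀ * c = c⁻¹ * s₀ * c⁻¹⁻¹ from by rw [inv_inv],
      cycleType_conj, hs₀]
  have hms' : m₀ * s₀ = c * (m * s) * c⁻¹ := by
    rw [hsdef, ← hc]
    group
  rcases hP s hconjs with h | h
  · exact hpow2 (by rw [hms', conj_pow, h, mul_one, mul_inv_cancel])
  · exact hpow3 (by rw [hms', conj_pow, h, mul_one, mul_inv_cancel])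
end SwapImage
section Construction
open Equiv Equiv.Perm

lemma swap_triple {α : Type*} [DecidableEq α] {p u v : α}
    (hu : u ≠ p) (hv : v ≠ p) (huv : u ≠ v) :
    Equiv.swap p u * Equiv.swap p v * Equiv.swap u v = Equiv.swap p v := by
  have h3 := swap_cube hu hv huv
  have hconj : Equiv.swap p u * Equiv.swap p v * Equiv.swap p u = Equiv.swap u v := by
    have h := Equiv.swap_apply_apply (Equiv.swap p u) p v
    rw [Equiv.swap_apply_left, Equiv.swap_apply_of_ne_of_ne hv (Ne.symm huv),
      Equiv.swap_inv] at h
    exact h.symm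
  rw [← hconj]
  have expand : Equiv.swap p u * Equiv.swap p v *
      (Equiv.swap p u * Equiv.swap p v * Equiv.swap p u) * Equiv.swap p v = 1 := by
    rw [show Equiv.swap p u * Equiv.swap p v * (Equiv.swap p u * Equiv.swap p v * Equiv.swap p u) *
        Equiv.swap p v = (Equiv.swap p u * Equiv.swap p v)^3 from by
      rw [pow_succ, pow_two]; simp only [mul_assoc], h3]
  calc Equiv.swap p u * Equiv.swap p v * (Equiv.swap p u * Equiv.swap p v * Equiv.swap p u)
      = Equiv.swap p u * Equiv.swap p v *
        (Equiv.swap p u * Equiv.swap p v * Equiv.swap p u) * Equiv.swap p v *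
        Equiv.swap p v := by rw [mul_assoc _ (Equiv.swap p v) (Equiv.swap p v),
          Equiv.swap_mul_self, mul_one]
    _ = Equiv.swap p v := by rw [expand, one_mul]

lemma swap_eq_of_support {α : Type*} [DecidableEq α] [Fintype α] {f : Equiv.Perm α} {u v : α}
    (hf : f.IsSwap) (huv : u ≠ v) (hu : f u ≠ u) (hv : f v ≠ v) : f = Equiv.swap u v := by
  obtain ⟨a, b, hab, rfl⟩ := hf
  have hu' : u = a ∨ u = b := by
    by_contra hcon
    push_neg at hcon
    exact hu (Equiv.swap_apply_of_ne_of_ne hcon.1 hcon.2)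
  have hv' : v = a ∨ v = b := by
    by_contra hcon
    push_neg at hcon
    exact hv (Equiv.swap_apply_of_ne_of_ne hcon.1 hcon.2)
  rcases hu' with rfl | rfl <;> rcases hv' with rfl | rfl
  · exact absurd rfl huv
  · rfl
  · exact Equiv.swap_comm _ _
  · exact absurd rfl huv

lemma noncomm_swap0 {n : ℕ} [NeZero n] {i j : Fin n} (hi : i ≠ 0) (hj : j ≠ 0) (hij : i ≠ j) :
    ¬ Commute (Equiv.swap 0 i) (Equiv.swap 0 j) := by
  intro hcm
  have h := DFunLike.congr_fun hcm i
  rw [Equiv.Perm.mul_apply, Equiv.Perm.mul_apply, Equiv.swap_apply_of_ne_of_ne hi hij,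
    Equiv.swap_apply_right, Equiv.swap_apply_left] at h
  exact hj h.symm

lemma noncomm_map {G H : Type*} [Group G] [Group H] (φ : G ≃* H) {a b : G}
    (h : ¬ Commute a b) : ¬ Commute (φ a) (φ b) := by
  intro hcm
  apply h
  have : φ (a * b) = φ (b * a) := by rw [map_mul, map_mul]; exact hcm
  exact φ.injective this

lemma exists_conj (n : ℕ) (hn : n ≠ 6) (hn3 : 3 ≤ n)
    (φ : Equiv.Perm (Fin n) ≃* Equiv.Perm (Fin n)) :
    ∃ h : Equiv.Perm (Fin n), ∀ g : Equiv.Perm (Fin n), φ g = h * g * h⁻¹ := by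
  haveI : NeZero n := ⟨by omega⟩
  set x1 : Fin n := ⟨1, by omega⟩ with hx1
  set x2 : Fin n := ⟨2, by omega⟩ with hx2
  have hx10 : x1 ≠ 0 := by simp [hx1, Fin.ext_iff]
  have hx20 : x2 ≠ 0 := by simp [hx2, Fin.ext_iff]
  have hx12 : x1 ≠ x2 := by simp [hx1, hx2, Fin.ext_iff]
  have hswap : ∀ i : Fin n, i ≠ 0 → (φ (Equiv.swap 0 i)).IsSwap := fun i hi =>
    swap_image_isSwap hn φ (Ne.symm hi)
  -- T₁ and T₂ share a point
  obtain ⟨a1, b1, hab1, e1⟩ := hswap x1 hx10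
  obtain ⟨a2, b2, hab2, e2⟩ := hswap x2 hx20
  have hnc : ¬ Commute (Equiv.swap a1 b1) (Equiv.swap a2 b2) := by
    rw [← e1, ← e2]
    exact noncomm_map φ (noncomm_swap0 hx10 hx20 hx12)
  obtain ⟨p, u, v, hup, hvp, huv, r1, r2⟩ := swap_share_point hab1 hab2 hnc
  rw [r1] at e1
  rw [r2] at e2
  -- every φ (swap 0 i) is a swap at p
  have HA : ∀ i : Fin n, i ≠ 0 → ∃ b, b ≠ p ∧ φ (Equiv.swap 0 i) = Equiv.swap p b := by
    intro i hi
    rcases eq_or_ne i x1 with rfl | hix1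
    · exact ⟨u, hup, e1⟩
    rcases eq_or_ne i x2 with rfl | hix2
    · exact ⟨v, hvp, e2⟩
    obtain ⟨ai, bi, habi, ei⟩ := hswap i hi
    have hnci1 : ¬ Commute (Equiv.swap p u) (Equiv.swap ai bi) := by
      rw [← e1, ← ei]
      exact noncomm_map φ (noncomm_swap0 hx10 hi (Ne.symm hix1))
    have hnci2 : ¬ Commute (Equiv.swap p v) (Equiv.swap ai bi) := by
      rw [← e2, ← ei]
      exact noncomm_map φ (noncomm_swap0 hx20 hi (Ne.symm hix2))
    by_cases hp : Equiv.swap ai bi p ≠ p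
    · -- p is in the support of Tᵢ; so Tᵢ = swap p b for some b
      have : p = ai ∨ p = bi := by
        by_contra hcon
        push_neg at hcon
        exact hp (Equiv.swap_apply_of_ne_of_ne hcon.1 hcon.2)
      rcases this with rfl | rfl
      · exact ⟨bi, Ne.symm habi, by rw [ei]⟩
      · exact ⟨ai, habi, by rw [ei, Equiv.swap_comm]⟩
    · -- otherwise Tᵢ = swap u v, contradiction
      exfalso
      push_neg at hp
      -- Tᵢ moves u and v
      have hmu : Equiv.swap ai bi u ≠ u := by
        intro hmu
        apply hnci1
        obtain ⟨q, w, z, hwq, hzq, hwz, s1, s2⟩ :=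
          swap_share_point (show p ≠ u from Ne.symm hup) habi hnci1
        -- q is moved by both swaps
        exfalso
        have hq1 : Equiv.swap p u q ≠ q := by rw [s1]; simp [Equiv.swap_apply_left, hwq]
        have hq2 : Equiv.swap ai bi q ≠ q := by rw [s2]; simp [Equiv.swap_apply_left, hzq]
        have : q = p ∨ q = u := by
          by_contra hcon
          push_neg at hcon
          exact hq1 (Equiv.swap_apply_of_ne_of_ne hcon.1 hcon.2)
        rcases this with rfl | rfl
        · exact hq2 hp
        · exact hq2 hmu
      have hmv : Equiv.swap ai bi v ≠ v := by
        intro hmv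
        apply hnci2
        obtain ⟨q, w, z, hwq, hzq, hwz, s1, s2⟩ :=
          swap_share_point (show p ≠ v from Ne.symm hvp) habi hnci2
        exfalso
        have hq1 : Equiv.swap p v q ≠ q := by rw [s1]; simp [Equiv.swap_apply_left, hwq]
        have hq2 : Equiv.swap ai bi q ≠ q := by rw [s2]; simp [Equiv.swap_apply_left, hzq]
        have : q = p ∨ q = v := by
          by_contra hcon
          push_neg at hcon
          exact hq1 (Equiv.swap_apply_of_ne_of_ne hcon.1 hcon.2)
        rcases this with rfl | rfl
        · exact hq2 hp
        · exact hq2 hmv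
      have hTi : Equiv.swap ai bi = Equiv.swap u v :=
        swap_eq_of_support ⟨ai, bi, habi, rfl⟩ huv hmu hmv
      -- the 4-cycle relation
      set q : Equiv.Perm (Fin n) := Equiv.swap 0 x1 * Equiv.swap 0 x2 * Equiv.swap 0 i
        with hqdef
      have himg : φ q = Equiv.swap p v := by
        rw [hqdef, map_mul, map_mul, e1, e2, ei, hTi]
        exact swap_triple hup hvp huv
      have hq2 : q ^ 2 = 1 := by
        have : φ (q ^ 2) = 1 := by
          rw [map_pow, himg, pow_two, Equiv.swap_mul_self]
        have h1 : φ (q ^ 2) = φ 1 := by rw [this, map_one]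
        exact φ.injective h1
      -- but q² moves 0
      have happ : (q ^ 2) 0 = x2 := by
        have hq0 : q 0 = i := by
          rw [hqdef]
          simp only [Equiv.Perm.mul_apply, Equiv.swap_apply_left]
          rw [Equiv.swap_apply_of_ne_of_ne hi hix2, Equiv.swap_apply_of_ne_of_ne hi hix1]
        have hqi : q i = x2 := by
          rw [hqdef]
          simp only [Equiv.Perm.mul_apply]
          rw [Equiv.swap_apply_right, Equiv.swap_apply_left,
            Equiv.swap_apply_of_ne_of_ne hx20 (Ne.symm hx12)]
        rw [pow_two, Equiv.Perm.mul_apply, hq0, hqi]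
      rw [hq2, Equiv.Perm.one_apply] at happ
      exact hx20 happ.symm
  -- construct the permutation
  have HAd : ∀ i : Fin n, i ≠ 0 → { b : Fin n // b ≠ p ∧ φ (Equiv.swap 0 i) = Equiv.swap p b } :=
    fun i hi => ⟨Classical.choose (HA i hi), Classical.choose_spec (HA i hi)⟩
  set f : Fin n → Fin n := fun i => if hi : i = 0 then p else (HAd i hi).1 with hfdef
  have hf0 : f 0 = p := by simp [hfdef]
  have hfspec : ∀ i : Fin n, ∀ hi : i ≠ 0, f i ≠ p ∧ φ (Equiv.swap 0 i) = Equiv.swap p (f i) := by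
    intro i hi
    simp only [hfdef, dif_neg hi]
    exact (HAd i hi).2
  have hinj : Function.Injective f := by
    intro i j hij
    rcases eq_or_ne i 0 with rfl | hi
    · rcases eq_or_ne j 0 with rfl | hj
      · rfl
      · exact absurd (hf0 ▸ hij).symm (hfspec j hj).1
    · rcases eq_or_ne j 0 with rfl | hj
      · exact absurd (hf0 ▸ hij) (hfspec i hi).1
      · have : φ (Equiv.swap 0 i) = φ (Equiv.swap 0 j) := by
          rw [(hfspec i hi).2, (hfspec j hj).2, hij]
        have hsw := φ.injective this
        by_contra hij'
        have := DFunLike.congr_fun hsw i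
        rw [Equiv.swap_apply_right, Equiv.swap_apply_of_ne_of_ne hi hij'] at this
        exact hi this.symm
  set h : Equiv.Perm (Fin n) := Equiv.ofBijective f (Finite.injective_iff_bijective.mp hinj)
    with hhdef
  have hh : ∀ i, h i = f i := fun i => rfl
  have hkey : ∀ i : Fin n, i ≠ 0 → φ (Equiv.swap 0 i) = h * Equiv.swap 0 i * h⁻¹ := by
    intro i hi
    rw [← Equiv.swap_apply_apply, hh, hh, hf0, (hfspec i hi).2]
  have hswaps : ∀ x y : Fin n, x ≠ y → φ (Equiv.swap x y) = h * Equiv.swap x y * h⁻¹ := by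
    intro x y hxy
    rcases eq_or_ne x 0 with rfl | hx
    · exact hkey y (Ne.symm hxy)
    · rcases eq_or_ne y 0 with rfl | hy
      · rw [Equiv.swap_comm]
        exact hkey x hx
      · have hid : Equiv.swap 0 x * Equiv.swap y 0 * Equiv.swap 0 x = Equiv.swap x y :=
          Equiv.swap_mul_swap_mul_swap hy (Ne.symm hxy)
        rw [← hid, Equiv.swap_comm y 0, map_mul, map_mul,
          hkey x hx, hkey y hy]
        group
  refine ⟨h, fun g => ?_⟩
  have hg : g ∈ Subgroup.closure { σ : Equiv.Perm (Fin n) | σ.IsSwap } := by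
    rw [Equiv.Perm.closure_isSwap]; trivial
  induction hg using Subgroup.closure_induction with
  | mem σ hσ =>
    obtain ⟨a, b, hab, rfl⟩ := hσ
    exact hswaps a b hab
  | one => rw [map_one]; group
  | mul σ τ hσ hτ ihσ ihτ => rw [map_mul, ihσ, ihτ]; group
  | inv σ hσ ihσ => rw [map_inv, ihσ]; group
end Construction

/-- Every automorphism of the symmetric group `Sₙ` for `n ≠ 6` is inner. -/
theorem symmetricGroup_automorphism_inner (n : ℕ) (hn : n ≠ 6)
    (φ : Equiv.Perm (Fin n) ≃* Equiv.Perm (Fin n)) :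
    ∃ h : Equiv.Perm (Fin n), ∀ g : Equiv.Perm (Fin n), φ g = h * g * h⁻¹ := by
  rcases lt_or_ge n 2 with h2 | h2
  · refine ⟨1, fun g => ?_⟩
    haveI : Subsingleton (Fin n) := by
      constructor
      intro a b
      have ha := a.isLt
      have hb := b.isLt
      exact Fin.ext (by omega)
    have hg : g = 1 := Equiv.ext fun i => Subsingleton.elim _ _
    rw [hg, map_one]
    group
  rcases eq_or_lt_of_le h2 with h2' | h3
  · -- n = 2
    have hn2 : n = 2 := h2'.symm
    subst hn2
    refine ⟨1, fun g => ?_⟩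
    have hcases : ∀ x : Equiv.Perm (Fin 2), x = 1 ∨ x = Equiv.swap 0 1 := by decide
    rcases hcases g with rfl | rfl
    · rw [map_one]; group
    · have hne : φ (Equiv.swap 0 1) ≠ 1 := by
        intro hc
        have := φ.injective (hc.trans (map_one φ).symm)
        exact absurd this (by decide)
      rcases hcases (φ (Equiv.swap 0 1)) with h | h
      · exact absurd h hne
      · rw [h]; group
  · exact exists_conj n hn (by omega) φ
end

section
/- Let K be a field and A a central simple algebra over K. Then A ⊗_K A^op is isomorphic as a K-algebra to the matrix algebra M_n(K) where n = dim_K A. In particular, the Brauer class of the opposite algebra A^op is the inverse of the Brauer class of A. -/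
open TensorProduct Pointwise

section Aux

variable {K A : Type*} [Field K] [Ring A] [Algebra K A]
  [Algebra.IsCentral K A] [IsSimpleRing A]

/-- Artin–Whaples style lemma: if `∑ i ∈ s, a i * x * b i = 0` for all `x`, with `b`
linearly independent over `K` and `A` central simple, then all `a i` vanish. -/
lemma aux_coeff_zero {ι : Type*} (b : ι → A) (hb : LinearIndependent K b) :
    ∀ (s : Finset ι) (a : ι → A), (∀ i ∉ s, a i = 0) →
      (∀ x : A, ∑ i ∈ s, a i * x * b i = 0) → ∀ i, a i = 0 := by
  classical
  intro s
  induction s using Finset.strongInduction with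
  | _ s IH =>
    intro a ha0 hsum
    by_contra hcon
    push_neg at hcon
    obtain ⟨i₀, hi₀⟩ := hcon
    have hi₀s : i₀ ∈ s := by
      by_contra h
      exact hi₀ (ha0 _ h)
    -- the two-sided ideal generated by `a i₀` is everything
    have hspan : TwoSidedIdeal.span {a i₀} = ⊤ := by
      rcases (IsSimpleRing.simple (R := A)).eq_bot_or_eq_top
          (TwoSidedIdeal.span {a i₀}) with h | h
      · exfalso
        have : a i₀ ∈ TwoSidedIdeal.span {a i₀} :=
          TwoSidedIdeal.subset_span rfl
        rw [h, TwoSidedIdeal.mem_bot] at this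
        exact hi₀ this
      · exact h
    have h1 : (1 : A) ∈ TwoSidedIdeal.span {a i₀} := by
      rw [hspan]; exact TwoSidedIdeal.mem_top _
    rw [TwoSidedIdeal.mem_span_iff_mem_addSubgroup_closure] at h1
    -- From the closure membership, produce a new coefficient family with value 1 at i₀
    have key : ∀ z ∈ AddSubgroup.closure (Set.univ * ({a i₀} : Set A) * Set.univ),
        ∃ a' : ι → A, a' i₀ = z ∧ (∀ i ∉ s, a' i = 0) ∧
          (∀ x : A, ∑ i ∈ s, a' i * x * b i = 0) := by
      intro z hz
      induction hz using AddSubgroup.closure_induction with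
      | mem z hzmem =>
        obtain ⟨u, ⟨c, -, t, ht, rfl⟩, d, -, rfl⟩ := hzmem
        obtain rfl : t = a i₀ := ht
        refine ⟨fun i => c * a i * d, rfl, fun i hi => by simp [ha0 i hi], fun x => ?_⟩
        have := hsum (d * x)
        calc ∑ i ∈ s, c * a i * d * x * b i
            = c * ∑ i ∈ s, a i * (d * x) * b i := by
              rw [Finset.mul_sum]; congr 1; ext i; noncomm_ring
          _ = 0 := by rw [this, mul_zero]
      | zero => exact ⟨0, rfl, fun _ _ => rfl, fun x => by simp⟩
      | add z₁ z₂ _ _ ih₁ ih₂ =>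
        obtain ⟨a₁, h₁, h₁0, h₁s⟩ := ih₁
        obtain ⟨a₂, h₂, h₂0, h₂s⟩ := ih₂
        refine ⟨a₁ + a₂, by simp [h₁, h₂], fun i hi => by simp [h₁0 i hi, h₂0 i hi],
          fun x => ?_⟩
        have e : ∀ i, (a₁ + a₂) i * x * b i = a₁ i * x * b i + a₂ i * x * b i := by
          intro i; simp [add_mul]
        simp only [e, Finset.sum_add_distrib, h₁s x, h₂s x, add_zero]
      | neg z _ ih =>
        obtain ⟨a₁, h₁, h₁0, h₁s⟩ := ih
        refine ⟨-a₁, by simp [h₁], fun i hi => by simp [h₁0 i hi], fun x => ?_⟩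
        have e : ∀ i, (-a₁) i * x * b i = -(a₁ i * x * b i) := by
          intro i; simp
        simp only [e, Finset.sum_neg_distrib, h₁s x, neg_zero]
    obtain ⟨a', ha'1, ha'0, ha's⟩ := key 1 h1
    -- commutator trick: each `a' i` is central
    have hcomm : ∀ c : A, ∀ i, c * a' i - a' i * c = 0 := by
      intro c
      refine IH (s.erase i₀) (Finset.erase_ssubset hi₀s)
        (fun i => c * a' i - a' i * c) (fun i hi => ?_) (fun x => ?_)
      · by_cases h : i = i₀
        · simp [h, ha'1]
        · simp [ha'0 i (fun hmem => hi (Finset.mem_erase.mpr ⟨h, hmem⟩))]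
      · have h0 : (c * a' i₀ - a' i₀ * c) * x * b i₀ = 0 := by
          rw [ha'1]; simp
        rw [Finset.sum_erase s h0]
        have := ha's x
        have := ha's (c * x)
        calc ∑ i ∈ s, (c * a' i - a' i * c) * x * b i
            = c * ∑ i ∈ s, a' i * x * b i - ∑ i ∈ s, a' i * (c * x) * b i := by
              rw [Finset.mul_sum, ← Finset.sum_sub_distrib]
              congr 1; ext i; noncomm_ring
          _ = 0 := by rw [ha's x, ha's (c * x), mul_zero, sub_zero]
    -- hence each `a' i` lies in the center, which is `K`
    have hcentral : ∀ i, ∃ k : K, a' i = algebraMap K A k := by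
      intro i
      have : a' i ∈ Subalgebra.center K A := by
        rw [Subalgebra.mem_center_iff]
        intro c
        exact sub_eq_zero.mp (hcomm c i)
      have hle : Subalgebra.center K A ≤ ⊥ := Algebra.IsCentral.out
      obtain ⟨k, hk⟩ := Algebra.mem_bot.mp (hle this)
      exact ⟨k, hk.symm⟩
    choose g hg using hcentral
    -- use linear independence with x = 1
    have hsum1 : ∑ i ∈ s, g i • b i = 0 := by
      have := ha's 1
      calc ∑ i ∈ s, g i • b i = ∑ i ∈ s, a' i * 1 * b i := by
            refine Finset.sum_congr rfl fun i _ => ?_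
            rw [hg i, mul_one, Algebra.smul_def]
        _ = 0 := this
    have hg0 := linearIndependent_iff'.mp hb s g hsum1 i₀ hi₀s
    have : (1 : A) = 0 := by
      rw [← ha'1, hg i₀, hg0, map_zero]
    exact one_ne_zero this

end Aux

/-- For a finite-dimensional central simple algebra `A` over a field `K`, the algebra
`A ⊗[K] Aᵐᵒᵖ` is isomorphic to the matrix algebra `End_K A ≅ Mₙ(K)`, `n = dim_K A`.
In particular the Brauer class of `Aᵐᵒᵖ` is inverse to that of `A`. -/
theorem tensor_op_iso_end (K A : Type*) [Field K] [Ring A] [Algebra K A]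
    [Algebra.IsCentral K A] [IsSimpleRing A] [FiniteDimensional K A] :
    Nonempty (A ⊗[K] Aᵐᵒᵖ ≃ₐ[K] Module.End K A) := by
  classical
  -- right multiplication as an algebra hom from the opposite algebra
  let g : Aᵐᵒᵖ →ₐ[K] Module.End K A :=
    { toFun := fun x => LinearMap.mulRight K x.unop
      map_one' := by ext z; simp
      map_mul' := fun x y => by ext z; simp [mul_assoc]
      map_zero' := by ext z; simp
      map_add' := fun x y => by ext z; simp [mul_add]
      commutes' := fun k => by
        ext z
        simp [Algebra.smul_def, Algebra.commutes, Module.algebraMap_end_apply] }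
  have hfg : ∀ (x : A) (y : Aᵐᵒᵖ), Commute (Algebra.lmul K A x) (g y) := by
    intro x y
    ext z
    simp [g, mul_assoc]
  let φ : (A ⊗[K] Aᵐᵒᵖ) →ₐ[K] Module.End K A :=
    Algebra.TensorProduct.lift (Algebra.lmul K A) g hfg
  have hφ : ∀ (a : A) (b : Aᵐᵒᵖ) (z : A), φ (a ⊗ₜ b) z = a * z * b.unop := by
    intro a b z
    simp [φ, Algebra.TensorProduct.lift_tmul, g, mul_assoc]
  -- injectivity
  have hinj : Function.Injective φ := by
    rw [injective_iff_map_eq_zero]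
    intro x hx
    let e := Module.finBasis K A
    let eop : Module.Basis (Fin (Module.finrank K A)) K Aᵐᵒᵖ :=
      e.map (MulOpposite.opLinearEquiv K)
    let B := eop.baseChange A
    have hxrepr : x = ∑ i, B.repr x i ⊗ₜ[K] MulOpposite.op (e i) := by
      conv_lhs => rw [← B.sum_repr x]
      refine Finset.sum_congr rfl fun i _ => ?_
      rw [Module.Basis.baseChange_apply, TensorProduct.smul_tmul']
      simp [eop, smul_eq_mul]
    have hzero : ∀ z : A, ∑ i, B.repr x i * z * e i = 0 := by
      intro z
      have : φ x z = 0 := by rw [hx]; rfl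
      rw [hxrepr] at this
      simpa [map_sum, hφ, LinearMap.sum_apply] using this
    have hcoef : ∀ i, B.repr x i = 0 :=
      aux_coeff_zero e e.linearIndependent Finset.univ (fun i => B.repr x i)
        (fun i hi => absurd (Finset.mem_univ i) hi) hzero
    rw [hxrepr]
    simp [hcoef]
  -- dimension count gives surjectivity
  have hdim : Module.finrank K (A ⊗[K] Aᵐᵒᵖ) = Module.finrank K (Module.End K A) := by
    rw [Module.finrank_tensorProduct]
    have : Module.finrank K Aᵐᵒᵖ = Module.finrank K A :=
      (MulOpposite.opLinearEquiv K (M := A)).symm.finrank_eq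
    rw [this]
    exact (Module.finrank_linearMap (R := K) (S := K) (M := A) (N := A)).symm
  have hsurj : Function.Surjective φ :=
    (LinearMap.injective_iff_surjective_of_finrank_eq_finrank hdim).mp hinj
  exact ⟨AlgEquiv.ofBijective φ ⟨hinj, hsurj⟩⟩
end
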